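/- Let $s = c^* L^{-1} b$ where $L$ is an invertible $d \times d$ complex matrix and $b, c \in \mathbb{C}^d$. Then the scalar $\bar{s} s = s^* s$ equals $(0 \;\; b^*) \begin{pmatrix} c c^* & L^* \\ -L & 0 \end{pmatrix}^{-1} \begin{pmatrix} 0 \\ b \end{pmatrix}$, provided the displayed $2d \times 2d$ block matrix is invertible; moreover this block matrix is invertible whenever $L$ is, with real part $\begin{pmatrix} cc^* & 0 \\ 0 & 0\end{pmatrix} \succeq 0$. -/

import Mathlib

open Matrix
open scoped ComplexOrder

theorem stmt_19 (d : ℕ) (b c : Fin d → ℂ) (L : Matrix (Fin d) (Fin d) ℂ) (hL : IsUnit L)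
    (s : ℂ) (hs : s = star c ⬝ᵥ L⁻¹.mulVec b)
    (N : Matrix (Fin d ⊕ Fin d) (Fin d ⊕ Fin d) ℂ)
    (hN : N = Matrix.fromBlocks (Matrix.vecMulVec c (star c)) Lᴴ (-L) 0) :
    IsUnit N ∧
    (1 / 2 : ℂ) • (N + Nᴴ) = Matrix.fromBlocks (Matrix.vecMulVec c (star c)) 0 0 0 ∧
    ((1 / 2 : ℂ) • (N + Nᴴ)).PosSemidef ∧
    star s * s = star (Sum.elim (0 : Fin d → ℂ) b) ⬝ᵥ N⁻¹.mulVec (Sum.elim (0 : Fin d → ℂ) b) := by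
  have hdet : IsUnit L.det := (Matrix.isUnit_iff_isUnit_det L).mp hL
  have hdetH : IsUnit Lᴴ.det := by
    rw [Matrix.det_conjTranspose]; exact hdet.star
  set A := Matrix.vecMulVec c (star c) with hA
  set M := Matrix.fromBlocks (0 : Matrix (Fin d) (Fin d) ℂ) (-L⁻¹) Lᴴ⁻¹ (Lᴴ⁻¹ * A * L⁻¹) with hM
  have hNM : N * M = 1 := by
    rw [hN, hM, Matrix.fromBlocks_multiply, ← Matrix.fromBlocks_one]
    simp [← Matrix.mul_assoc, Matrix.mul_nonsing_inv _ hdetH, Matrix.mul_nonsing_inv _ hdet]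
  have hMN : M * N = 1 := by
    rw [hN, hM, Matrix.fromBlocks_multiply, ← Matrix.fromBlocks_one]
    simp [Matrix.mul_assoc, Matrix.nonsing_inv_mul _ hdet, Matrix.nonsing_inv_mul _ hdetH]
  have hunit : IsUnit N := ⟨⟨N, M, hNM, hMN⟩, rfl⟩
  have hNinv : N⁻¹ = M := Matrix.inv_eq_right_inv hNM
  have hAH : Aᴴ = A := by
    ext i j
    simp [hA, Matrix.vecMulVec_apply, mul_comm]
  have hconj : ∀ i j, (starRingEnd ℂ) (A j i) = A i j := by
    intro i j
    have := congrFun (congrFun hAH i) j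
    rwa [Matrix.conjTranspose_apply] at this
  have hherm : (1 / 2 : ℂ) • (N + Nᴴ) = Matrix.fromBlocks A 0 0 0 := by
    rw [hN]
    ext i j
    rcases i with i | i <;> rcases j with j | j <;>
      simp [Matrix.fromBlocks, Matrix.conjTranspose_apply] <;>
      rw [hconj] <;> ring
  refine ⟨hunit, hherm, ?_, ?_⟩
  · rw [hherm]
    rw [Matrix.posSemidef_iff_dotProduct_mulVec]
    constructor
    · unfold Matrix.IsHermitian
      ext i j
      rcases i with i | i <;> rcases j with j | j <;>
        simp [Matrix.fromBlocks, Matrix.conjTranspose_apply, hconj]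
    · intro x
      have hx : x = Sum.elim (fun i => x (Sum.inl i)) (fun i => x (Sum.inr i)) := by
        ext (i | i) <;> rfl
      rw [hx, Matrix.fromBlocks_mulVec]
      simp only [Sum.elim_comp_inl, Sum.elim_comp_inr]
      set x₁ : Fin d → ℂ := fun i => x (Sum.inl i) with hx₁
      set x₂ : Fin d → ℂ := fun i => x (Sum.inr i) with hx₂
      have hstar : star (Sum.elim x₁ x₂) = Sum.elim (star x₁) (star x₂) := by
        ext (i | i) <;> rfl
      rw [hstar, sumElim_dotProduct_sumElim]
      simp only [Matrix.mulVec_zero, add_zero, zero_add, Matrix.zero_mulVec,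
        dotProduct_zero]
      have hAmul : A.mulVec x₁ = (star c ⬝ᵥ x₁) • c := by
        ext i
        simp [hA, Matrix.mulVec, dotProduct, Matrix.vecMulVec_apply, Finset.mul_sum,
          mul_comm, mul_left_comm]
      rw [hAmul, dotProduct_smul, Matrix.star_dotProduct, smul_eq_mul]
      exact star_mul_self_nonneg (star x₁ ⬝ᵥ c)
  · rw [hNinv, hM, Matrix.fromBlocks_mulVec]
    simp only [Sum.elim_comp_inl, Sum.elim_comp_inr]
    have h0 : star (Sum.elim (0 : Fin d → ℂ) b) = Sum.elim (0 : Fin d → ℂ) (star b) := by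
      ext (i | i) <;> simp
    rw [h0, sumElim_dotProduct_sumElim]
    simp only [Matrix.zero_mulVec, zero_add, zero_dotProduct, Matrix.mulVec_zero, add_zero]
    have hw : (Lᴴ⁻¹ * A * L⁻¹).mulVec b = Lᴴ⁻¹.mulVec (A.mulVec (L⁻¹.mulVec b)) := by
      rw [Matrix.mulVec_mulVec, Matrix.mulVec_mulVec]
    rw [hw]
    have hAmul : A.mulVec (L⁻¹.mulVec b) = s • c := by
      ext i
      simp [hA, hs, Matrix.mulVec, dotProduct, Matrix.vecMulVec_apply, Finset.mul_sum,
        mul_comm, mul_left_comm]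
    rw [hAmul, Matrix.mulVec_smul, dotProduct_smul]
    have hLH : Lᴴ⁻¹ = (L⁻¹)ᴴ := (Matrix.conjTranspose_nonsing_inv L).symm
    have hkey : star b ⬝ᵥ (L⁻¹)ᴴ.mulVec c = star s := by
      rw [Matrix.mulVec_conjTranspose, Matrix.dotProduct_star, star_star,
        ← Matrix.dotProduct_mulVec, ← hs]
    rw [hLH, hkey, smul_eq_mul, mul_comm]
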